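/- In the graph G on n vertices (n even, n ≥ 4) consisting of two cliques A and B of size n/2 joined by a perfect matching, any initially infected set consisting of all of B together with at most one vertex of A fails to percolate in 3-neighbour bootstrap percolation: its 3-neighbour bootstrap closure contains no vertex of A other than the one initially infected. -/

import Mathlib

open Finset

open scoped Classical

noncomputable section

variable {V : Type*}

/-- Number of neighbours of `v` inside the set `A`. -/
def nbrsIn (G : SimpleGraph V) (A : Finset V) (v : V) : ℕ :=
  (A.filter (fun u => G.Adj v u)).card

/-- One step of the `r`-neighbour bootstrap process. -/
def bootStep [Fintype V] (G : SimpleGraph V) (r : ℕ) (A : Finset V) : Finset V :=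
  A ∪ Finset.univ.filter (fun v => r ≤ nbrsIn G A v)

/-- The sets `A_t` of the `r`-neighbour bootstrap process started at `A`. -/
def bootSeq [Fintype V] (G : SimpleGraph V) (r : ℕ) (A : Finset V) : ℕ → Finset V
  | 0 => A
  | t + 1 => bootStep G r (bootSeq G r A t)

/-- `A` is closed under the `r`-neighbour bootstrap rule. -/
def BootClosed (G : SimpleGraph V) (r : ℕ) (A : Finset V) : Prop :=
  ∀ v, r ≤ nbrsIn G A v → v ∈ A

/-- The `r`-neighbour bootstrap closure `⟨A⟩_r`: the smallest closed superset of `A`. -/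
def bootClosure [Fintype V] (G : SimpleGraph V) (r : ℕ) (A : Finset V) : Finset V :=
  Finset.univ.filter (fun v => ∀ B : Finset V, A ⊆ B → BootClosed G r B → v ∈ B)

/-- `m(G, r)`: the minimum size of a percolating set. -/
def minPerc [Fintype V] (G : SimpleGraph V) (r : ℕ) : ℕ :=
  sInf {k | ∃ A : Finset V, A.card = k ∧ bootClosure G r A = Finset.univ}

end

/-- Two cliques of size `n/2` (the lower and upper halves of `Fin n`) joined by the
perfect matching `i ↔ i + n/2`. -/
def matchGraph (n : ℕ) : SimpleGraph (Fin n) where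
  Adj i j := i ≠ j ∧ (((i : ℕ) < n / 2 ↔ (j : ℕ) < n / 2) ∨
    (j : ℕ) = (i : ℕ) + n / 2 ∨ (i : ℕ) = (j : ℕ) + n / 2)
  symm := by
    constructor
    intro i j h
    exact ⟨h.1.symm, by tauto⟩
  loopless := by
    constructor
    intro i h
    exact h.1 rfl

theorem stmt_18 (n : ℕ) (hn : 4 ≤ n) (he : Even n)
    (S : Finset (Fin n))
    (hB : ∀ i : Fin n, n / 2 ≤ (i : ℕ) → i ∈ S)
    (hA : (S.filter (fun i => (i : ℕ) < n / 2)).card ≤ 1) :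
    ∀ v : Fin n, (v : ℕ) < n / 2 → v ∈ bootClosure (matchGraph n) 3 S → v ∈ S := by
  intro v hv hcl
  obtain ⟨k, hk⟩ := he
  have hk2 : n / 2 = k := by omega
  have hclosed : BootClosed (matchGraph n) 3 S := by
    intro w hw
    by_contra hwS
    have hwA : (w : ℕ) < n / 2 := by
      by_contra h
      exact hwS (hB w (le_of_not_gt h))
    have hwn : (w : ℕ) + n / 2 < n := by omega
    have hsub : S.filter (fun u => (matchGraph n).Adj w u) ⊆
        insert (⟨(w : ℕ) + n / 2, hwn⟩ : Fin n)
          (S.filter (fun i => (i : ℕ) < n / 2)) := by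
      intro u hu
      simp only [mem_filter] at hu
      obtain ⟨huS, hadj⟩ := hu
      obtain ⟨hne, hcase⟩ := hadj
      by_cases hu2 : (u : ℕ) < n / 2
      · exact mem_insert_of_mem (mem_filter.mpr ⟨huS, hu2⟩)
      · have : (u : ℕ) = (w : ℕ) + n / 2 := by
          rcases hcase with h | h | h
          · omega
          · exact h
          · omega
        have : u = (⟨(w : ℕ) + n / 2, hwn⟩ : Fin n) := Fin.ext this
        rw [this]
        exact mem_insert_self _ _
    have hcard := card_le_card hsub
    have h2 := card_insert_le (⟨(w : ℕ) + n / 2, hwn⟩ : Fin n)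
      (S.filter (fun i => (i : ℕ) < n / 2))
    have hA' : (S.filter (fun i : Fin n => (i : ℕ) < n / 2)).card ≤ 1 := by
      refine le_trans (card_le_card_of_injOn Fin.val (fun x hx => ?_)
        (fun a _ b _ h => Fin.val_injective h)) hA
      simp only [mem_filter, bind_def, pure_def, mem_sup, mem_singleton] at hx ⊢
      exact mem_filter.mpr ⟨by convert (Finset.mem_sup (f := fun a : Fin n => ({(a : ℕ)} : Finset ℕ))).mpr ⟨x, (mem_filter.mp hx).1, mem_singleton_self _⟩, (mem_filter.mp hx).2⟩
    unfold nbrsIn at hw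
    omega
  simp only [bootClosure, mem_filter] at hcl
  exact hcl.2 S (Finset.Subset.refl S) hclosed
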